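/- There exists a sequence B of natural numbers such that the set Δ(B) − Δ(B) does not contain any IP-set (set of all finite sums of a sequence of nonzero integers). In particular, one may take B = (b_n) with b_n > 4·(b_1 + ⋯ + b_{n−1}). -/

import Mathlib

/-- The difference set `Δ(B) = {b_i - b_j : i > j}` of a sequence. -/
def deltaSet (b : ℕ → ℕ) : Set ℤ := {d | ∃ i j : ℕ, j < i ∧ d = (b i : ℤ) - (b j : ℤ)}

/-- `Δ(B) - Δ(B) = {a - c : a, c ∈ Δ(B)}`. -/
def deltaSubDelta (b : ℕ → ℕ) : Set ℤ :=
  {d | ∃ a ∈ deltaSet b, ∃ c ∈ deltaSet b, d = a - c}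

/-- the signed indicator "digit vector" of `100^i - 100^j - 100^k + 100^l`. -/
private def Fq (i j k l : ℕ) : ℕ → ℤ := fun n =>
  (if n = i then 1 else 0) - (if n = j then 1 else 0) - (if n = k then 1 else 0)
    + (if n = l then 1 else 0)

private lemma Fq_bound (i j k l n : ℕ) : |Fq i j k l n| ≤ 2 := by
  unfold Fq; split_ifs <;> norm_num

private lemma Fq_supp {i j k l n : ℕ} (h : Fq i j k l n ≠ 0) :
    n ∈ ({i, j, k, l} : Finset ℕ) := by
  by_contra hn
  simp only [Finset.mem_insert, Finset.mem_singleton, not_or] at hn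
  exact h (by simp [Fq, hn.1, hn.2.1, hn.2.2.1, hn.2.2.2])

private lemma sum_single (c : ℤ) (i N : ℕ) (h : i < N) :
    ∑ n ∈ Finset.range N, (if n = i then c else 0) * 100 ^ n = c * 100 ^ i := by
  rw [Finset.sum_eq_single_of_mem i (Finset.mem_range.2 h)]
  · simp
  · intro b _ hb; simp [hb]

private lemma val_Fq (i j k l N : ℕ) (hi : i < N) (hj : j < N) (hk : k < N) (hl : l < N) :
    ∑ n ∈ Finset.range N, Fq i j k l n * 100 ^ n
      = 100 ^ i - 100 ^ j - 100 ^ k + 100 ^ l := by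
  simp only [Fq, sub_mul, add_mul]
  rw [Finset.sum_add_distrib, Finset.sum_sub_distrib, Finset.sum_sub_distrib,
    sum_single 1 i N hi, sum_single 1 j N hj, sum_single 1 k N hk, sum_single 1 l N hl]
  ring

private lemma digits_zero : ∀ (N : ℕ) (g : ℕ → ℤ), (∀ n, |g n| ≤ 49) →
    (∑ n ∈ Finset.range N, g n * 100 ^ n) = 0 → ∀ n < N, g n = 0 := by
  intro N
  induction N with
  | zero => intro g _ _ n hn; exact absurd hn (Nat.not_lt_zero n)
  | succ N ih =>
    intro g hb h0 n hn
    have hsplit : (∑ n ∈ Finset.range (N + 1), g n * 100 ^ n)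
        = g 0 + 100 * ∑ m ∈ Finset.range N, g (m + 1) * 100 ^ m := by
      rw [Finset.sum_range_succ', pow_zero, mul_one, add_comm, Finset.mul_sum]
      congr 1
      exact Finset.sum_congr rfl (fun m _ => by ring)
    rw [hsplit] at h0
    have hdvd : (100 : ℤ) ∣ g 0 :=
      ⟨-(∑ m ∈ Finset.range N, g (m + 1) * 100 ^ m), by linarith⟩
    obtain ⟨c, hc⟩ := hdvd
    have hb0 := hb 0
    have hg0 : g 0 = 0 := by
      rw [hc] at hb0 ⊢
      rw [abs_mul] at hb0
      have habs : |(100 : ℤ)| = 100 := by norm_num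
      rw [habs] at hb0
      have hc0 : |c| < 1 := by nlinarith [abs_nonneg c]
      have : c = 0 := by rw [abs_lt] at hc0; omega
      simp [this]
    have hS : (∑ m ∈ Finset.range N, g (m + 1) * 100 ^ m) = 0 := by
      rw [hg0] at h0; linarith
    have hrest := ih (fun m => g (m + 1)) (fun n => hb (n + 1)) hS
    match n, hn with
    | 0, _ => exact hg0
    | (m + 1), hm => exact hrest m (by omega)

/-- The combinatorial core: there is no infinite family of nonzero digit vectors all of
whose small subset sums are of the 4-term form `Fq`. -/
private lemma no_such (w : ℕ → ℕ → ℤ)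
    (hne : ∀ k, ∃ x, w k x ≠ 0)
    (hQ : ∀ K : Finset ℕ, K.Nonempty → K.card ≤ 5 →
      ∃ i j k l : ℕ, ∀ x, (∑ m ∈ K, w m x) = Fq i j k l x) : False := by
  classical
  have hbound : ∀ K : Finset ℕ, K.Nonempty → K.card ≤ 5 → ∀ x, |∑ m ∈ K, w m x| ≤ 2 := by
    intro K h1 h2 x
    obtain ⟨i, j, k, l, h⟩ := hQ K h1 h2
    rw [h x]; exact Fq_bound i j k l x
  have hwb : ∀ p x, |w p x| ≤ 2 := by
    intro p x
    have := hbound {p} (Finset.singleton_nonempty p) (by simp) x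
    simpa using this
  -- each coordinate is hit by only finitely many vectors
  have hfin : ∀ x, {k : ℕ | w k x ≠ 0}.Finite := by
    intro x
    by_contra hinf
    obtain ⟨T, hTsub, hTcard⟩ := Set.Infinite.exists_subset_card_eq hinf 5
    have hTsplit : (5 : ℕ) ≤ (T.filter (fun k => 0 < w k x)).card
        + (T.filter (fun k => w k x < 0)).card := by
      have hsub : T ⊆ (T.filter (fun k => 0 < w k x)) ∪ (T.filter (fun k => w k x < 0)) := by
        intro m hm
        have hm0 : w m x ≠ 0 := hTsub hm
        rcases lt_or_gt_of_ne hm0 with h | h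
        · exact Finset.mem_union_right _ (Finset.mem_filter.2 ⟨hm, h⟩)
        · exact Finset.mem_union_left _ (Finset.mem_filter.2 ⟨hm, h⟩)
      calc (5 : ℕ) = T.card := hTcard.symm
        _ ≤ _ := le_trans (Finset.card_le_card hsub) (Finset.card_union_le _ _)
    rcases (by omega : 3 ≤ (T.filter (fun k => 0 < w k x)).card
        ∨ 3 ≤ (T.filter (fun k => w k x < 0)).card) with hpos | hneg
    · obtain ⟨S, hSsub, hScard⟩ := Finset.exists_subset_card_eq hpos
      have hSne : S.Nonempty := Finset.card_pos.1 (by omega)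
      have hlow : (3 : ℤ) ≤ ∑ m ∈ S, w m x := by
        have h1 : ∀ m ∈ S, (1 : ℤ) ≤ w m x := by
          intro m hm
          have := (Finset.mem_filter.1 (hSsub hm)).2
          omega
        have := Finset.card_nsmul_le_sum S (fun m => w m x) 1 h1
        rw [hScard] at this
        simpa using this
      have habs := hbound S hSne (by omega) x
      rw [abs_le] at habs
      linarith
    · obtain ⟨S, hSsub, hScard⟩ := Finset.exists_subset_card_eq hneg
      have hSne : S.Nonempty := Finset.card_pos.1 (by omega)
      have hhigh : (∑ m ∈ S, w m x) ≤ -3 := by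
        have h1 : ∀ m ∈ S, w m x ≤ (-1 : ℤ) := by
          intro m hm
          have := (Finset.mem_filter.1 (hSsub hm)).2
          omega
        have := Finset.sum_le_card_nsmul S (fun m => w m x) (-1) h1
        rw [hScard] at this
        simpa using this
      have habs := hbound S hSne (by omega) x
      rw [abs_le] at habs
      linarith
  -- a finite superset of the support of each vector
  have hsupp : ∀ p : ℕ, ∃ s : Finset ℕ, ∀ x, w p x ≠ 0 → x ∈ s := by
    intro p
    obtain ⟨i, j, k, l, h⟩ := hQ {p} (Finset.singleton_nonempty p) (by simp)
    refine ⟨{i, j, k, l}, fun x hx => Fq_supp ?_⟩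
    rw [← h x, Finset.sum_singleton]
    exact hx
  choose sF hsF using hsupp
  -- we can always pick a fresh vector with support disjoint from a given finite family
  have fresh : ∀ P : Finset ℕ, ∃ k, k ∉ P ∧ ∀ p ∈ P, ∀ x, w p x ≠ 0 → w k x = 0 := by
    intro P
    obtain ⟨k, hk⟩ := Infinite.exists_notMem_finset
      (P ∪ P.biUnion (fun p => (sF p).biUnion (fun x => (hfin x).toFinset)))
    refine ⟨k, fun h => hk (Finset.mem_union_left _ h), ?_⟩
    intro p hp x hpx
    by_contra hkx
    apply hk
    apply Finset.mem_union_right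
    exact Finset.mem_biUnion.2 ⟨p, hp, Finset.mem_biUnion.2
      ⟨x, hsF p x hpx, (hfin x).mem_toFinset.2 hkx⟩⟩
  -- build a family of 5 vectors with pairwise disjoint supports
  have aux : ∀ m : ℕ, ∃ P : Finset ℕ, P.card = m ∧
      ∀ p ∈ P, ∀ q ∈ P, p ≠ q → ∀ x, w p x ≠ 0 → w q x = 0 := by
    intro m
    induction m with
    | zero => exact ⟨∅, rfl, by simp⟩
    | succ m ih =>
      obtain ⟨P, hPc, hPd⟩ := ih
      obtain ⟨k, hkP, hkD⟩ := fresh P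
      refine ⟨insert k P, by rw [Finset.card_insert_of_notMem hkP, hPc], ?_⟩
      intro p hp q hq hpq x hpx
      rcases Finset.mem_insert.1 hp with rfl | hp' <;> rcases Finset.mem_insert.1 hq with rfl | hq'
      · exact absurd rfl hpq
      · by_contra hqx
        exact hpx (hkD q hq' x hqx)
      · exact hkD p hp' x hpx
      · exact hPd p hp' q hq' hpq x hpx
  obtain ⟨P, hPc, hPd⟩ := aux 5
  have hPne : P.Nonempty := Finset.card_pos.1 (by omega)
  obtain ⟨i, j, k, l, hPF⟩ := hQ P hPne (by omega)
  choose xw hxw using hne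
  have hinj : Set.InjOn xw P := by
    intro p hp q hq hpq
    by_contra hne'
    have h0 : w q (xw p) = 0 := hPd p hp q hq hne' (xw p) (hxw p)
    rw [hpq] at h0
    exact hxw q h0
  have hmem : ∀ p ∈ P, xw p ∈ ({i, j, k, l} : Finset ℕ) := by
    intro p hp
    apply Fq_supp
    rw [← hPF (xw p), Finset.sum_eq_single_of_mem p hp]
    · exact hxw p
    · intro q hq hqp
      by_contra h
      exact hxw p (hPd q hq p hp hqp (xw p) h)
  have hcard : (P.image xw).card = 5 := by rw [Finset.card_image_of_injOn hinj, hPc]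
  have hsub : P.image xw ⊆ ({i, j, k, l} : Finset ℕ) := by
    intro y hy
    obtain ⟨p, hp, rfl⟩ := Finset.mem_image.1 hy
    exact hmem p hp
  have h2 : ({k, l} : Finset ℕ).card ≤ 2 :=
    le_trans (Finset.card_insert_le _ _) (by simp)
  have h3 : ({j, k, l} : Finset ℕ).card ≤ 3 :=
    le_trans (Finset.card_insert_le _ _) (by omega)
  have h4 : ({i, j, k, l} : Finset ℕ).card ≤ 4 :=
    le_trans (Finset.card_insert_le _ _) (by omega)
  have := Finset.card_le_card hsub
  omega

theorem exists_deltaSubDelta_no_IP :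
    ∃ b : ℕ → ℕ,
      (∀ n : ℕ, (4 : ℕ) * ∑ i ∈ Finset.range n, b i < b n) ∧
      ¬ ∃ a : ℕ → ℤ, (∀ n, a n ≠ 0) ∧
          ∀ K : Finset ℕ, K.Nonempty → (∑ i ∈ K, a i) ∈ deltaSubDelta b := by
  classical
  refine ⟨fun n => 100 ^ n, ?_, ?_⟩
  · intro n
    induction n with
    | zero => simp
    | succ n ih =>
      show 4 * ∑ i ∈ Finset.range (n + 1), 100 ^ i < 100 ^ (n + 1)
      simp only at ih
      rw [Finset.sum_range_succ, pow_succ]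
      nlinarith [Nat.zero_le (100 ^ n)]
  · rintro ⟨a, ha0, haS⟩
    have hquad : ∀ K : Finset ℕ, K.Nonempty →
        ∃ i j k l : ℕ, (∑ m ∈ K, a m) = 100 ^ i - 100 ^ j - 100 ^ k + 100 ^ l := by
      intro K hK
      obtain ⟨A, ⟨i, j, hji, rfl⟩, C, ⟨k, l, hlk, rfl⟩, hd⟩ := haS K hK
      exact ⟨i, j, k, l, by rw [hd]; push_cast; ring⟩
    choose qi qj qk ql hq using hquad
    set w : ℕ → ℕ → ℤ := fun p =>
      Fq (qi {p} (Finset.singleton_nonempty p)) (qj {p} (Finset.singleton_nonempty p))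
        (qk {p} (Finset.singleton_nonempty p)) (ql {p} (Finset.singleton_nonempty p)) with hw
    -- value of a single a_p as a digit sum
    have hap : ∀ p N, qi {p} (Finset.singleton_nonempty p) < N →
        qj {p} (Finset.singleton_nonempty p) < N →
        qk {p} (Finset.singleton_nonempty p) < N →
        ql {p} (Finset.singleton_nonempty p) < N →
        a p = ∑ n ∈ Finset.range N, w p n * 100 ^ n := by
      intro p N h1 h2 h3 h4
      have hv := val_Fq _ _ _ _ N h1 h2 h3 h4
      have hs := hq {p} (Finset.singleton_nonempty p)
      rw [Finset.sum_singleton] at hs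
      rw [hs, ← hv]
    apply no_such w
    · -- each w p is nonzero
      intro p
      by_contra h
      push_neg at h
      apply ha0 p
      set N := qi {p} (Finset.singleton_nonempty p) + qj {p} (Finset.singleton_nonempty p)
        + qk {p} (Finset.singleton_nonempty p) + ql {p} (Finset.singleton_nonempty p) + 1 with hN
      have hval := hap p N (by omega) (by omega) (by omega) (by omega)
      rw [hval]
      apply Finset.sum_eq_zero
      intro n _
      rw [h n, zero_mul]
    · -- every small subset sum is a 4-term digit vector
      intro K hK hc
      refine ⟨qi K hK, qj K hK, qk K hK, ql K hK, fun x => ?_⟩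
      set N := x + qi K hK + qj K hK + qk K hK + ql K hK
        + (∑ m ∈ K, (qi {m} (Finset.singleton_nonempty m) + qj {m} (Finset.singleton_nonempty m)
            + qk {m} (Finset.singleton_nonempty m) + ql {m} (Finset.singleton_nonempty m))) + 1 with hN
      have hfle : ∀ m ∈ K, qi {m} (Finset.singleton_nonempty m)
          + qj {m} (Finset.singleton_nonempty m) + qk {m} (Finset.singleton_nonempty m)
          + ql {m} (Finset.singleton_nonempty m)
          ≤ ∑ m ∈ K, (qi {m} (Finset.singleton_nonempty m) + qj {m} (Finset.singleton_nonempty m)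
            + qk {m} (Finset.singleton_nonempty m) + ql {m} (Finset.singleton_nonempty m)) :=
        fun m hm => Finset.single_le_sum
          (f := fun x => qi {x} (Finset.singleton_nonempty x) + qj {x} (Finset.singleton_nonempty x)
            + qk {x} (Finset.singleton_nonempty x) + ql {x} (Finset.singleton_nonempty x))
          (fun _ _ => Nat.zero_le _) hm
      have hg : ∀ n < N, ((∑ m ∈ K, w m n) - Fq (qi K hK) (qj K hK) (qk K hK) (ql K hK) n) = 0 := by
        apply digits_zero
        · intro n
          have h1 : |∑ m ∈ K, w m n| ≤ 10 := by
            calc |∑ m ∈ K, w m n| ≤ ∑ m ∈ K, |w m n| := Finset.abs_sum_le_sum_abs _ _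
              _ ≤ K.card • 2 := Finset.sum_le_card_nsmul _ _ _ (fun m _ => by
                  simp only [hw]; exact Fq_bound _ _ _ _ n)
              _ ≤ 5 • 2 := by
                  have := nsmul_le_nsmul_left (by norm_num : (0:ℤ) ≤ 2) hc
                  exact this
              _ = 10 := by norm_num
          have h2 : |Fq (qi K hK) (qj K hK) (qk K hK) (ql K hK) n| ≤ 2 := Fq_bound _ _ _ _ n
          calc |(∑ m ∈ K, w m n) - Fq (qi K hK) (qj K hK) (qk K hK) (ql K hK) n|
              ≤ |∑ m ∈ K, w m n| + |Fq (qi K hK) (qj K hK) (qk K hK) (ql K hK) n| :=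
                abs_sub _ _
            _ ≤ 49 := by linarith
        · have hterm : ∀ m ∈ K, (∑ n ∈ Finset.range N, w m n * 100 ^ n) = a m := by
            intro m hm
            have hb := hfle m hm
            exact (hap m N (by omega) (by omega) (by omega) (by omega)).symm
          have hv := val_Fq (qi K hK) (qj K hK) (qk K hK) (ql K hK) N
            (by omega) (by omega) (by omega) (by omega)
          calc ∑ n ∈ Finset.range N,
                ((∑ m ∈ K, w m n) - Fq (qi K hK) (qj K hK) (qk K hK) (ql K hK) n) * 100 ^ n
              = (∑ n ∈ Finset.range N, (∑ m ∈ K, w m n) * 100 ^ n)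
                - ∑ n ∈ Finset.range N, Fq (qi K hK) (qj K hK) (qk K hK) (ql K hK) n * 100 ^ n := by
                rw [← Finset.sum_sub_distrib]
                exact Finset.sum_congr rfl (fun n _ => by ring)
            _ = (∑ m ∈ K, ∑ n ∈ Finset.range N, w m n * 100 ^ n)
                - (100 ^ qi K hK - 100 ^ qj K hK - 100 ^ qk K hK + 100 ^ ql K hK) := by
                rw [hv]
                congr 1
                rw [Finset.sum_comm]
                exact Finset.sum_congr rfl (fun n _ => Finset.sum_mul _ _ _)
            _ = (∑ m ∈ K, a m) - (∑ m ∈ K, a m) := by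
                rw [Finset.sum_congr rfl hterm, hq K hK]
            _ = 0 := sub_self _
      have := hg x (by omega)
      omega
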